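/- The antipode s of the n-rank Taft algebra 𝒜̄_q(n) has order 2ℓ as an algebra anti-automorphism when ℓ > 1; in particular s² has order ℓ. -/

import Mathlib

open scoped TensorProduct

def starForm {n : ℕ} (α β : Fin n → ℤ) : ℤ :=
  ∑ j : Fin n, ∑ i : Fin n, if (j : ℕ) < (i : ℕ) then α i * β j else 0

noncomputable def theta {k : Type*} [Field k] (q : k) {n : ℕ} (α β : Fin n → ℤ) : k :=
  q ^ (starForm α β - starForm β α)

def epsZ {n : ℕ} (i : Fin n) : Fin n → ℤ := fun j => if j = i then 1 else 0

/-- The ordered monomial `x^γ = x_1^{γ_1} ⋯ x_n^{γ_n}` built from a family `x`. -/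
def xpow {A : Type*} [Ring A] {n : ℕ} (x : Fin n → A) (γ : Fin n → ℕ) : A :=
  ((List.finRange n).map (fun i => x i ^ γ i)).prod

/-- A presentation of the `n`-rank Taft algebra inside a Hopf algebra `A`
(generators `K(α)`, `x_i` and the defining relations, together with the values of
the comultiplication, counit and antipode on the generators).  The scalar `t`
is the parameter used in the skew bicharacter `θ`: for the `n`-rank Taft algebra
`𝒜̄_q(n)` one takes `t = q`, while `t = 1` gives the presentation of the `n`-fold
tensor power of the Taft algebra (the rank-`n` Taft algebra `𝒜̄_q(1)^{⊗n}`). -/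
structure TaftPresentation (k : Type*) [Field k] (A : Type*) [Ring A]
    [HopfAlgebra k A] (n ℓ : ℕ) (q t : k) where
  K : (Fin n → ℤ) → A
  x : Fin n → A
  K_zero : K 0 = 1
  K_add : ∀ α β, K α * K β = K (α + β)
  K_ell : ∀ i, K (epsZ i) ^ ℓ = 1
  K_x : ∀ i j, K (epsZ i) * x j
      = (theta t (epsZ i) (epsZ j) * if i = j then q else 1) • (x j * K (epsZ i))
  x_x : ∀ i j, x i * x j = theta t (epsZ i) (epsZ j) • (x j * x i)
  x_ell : ∀ i, x i ^ ℓ = 0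
  comul_K : ∀ α, Coalgebra.comul (R := k) (K α) = K α ⊗ₜ[k] K α
  comul_x : ∀ i, Coalgebra.comul (R := k) (x i) = x i ⊗ₜ[k] 1 + K (epsZ i) ⊗ₜ[k] x i
  counit_K : ∀ α, Coalgebra.counit (R := k) (K α) = 1
  counit_x : ∀ i, Coalgebra.counit (R := k) (x i) = 0
  antipode_K : ∀ α, HopfAlgebra.antipode (R := k) (K α) = K (-α)
  antipode_x : ∀ i, HopfAlgebra.antipode (R := k) (x i) = -(K (-epsZ i) * x i)

namespace TaftPresentation

variable {k : Type*} [Field k] {A : Type*} [Ring A] [HopfAlgebra k A]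
  {n ℓ : ℕ} {q t : k}

/-- The basis monomial `x^γ K(α)`. -/
def mono (T : TaftPresentation k A n ℓ q t) (γ α : Fin n → Fin ℓ) : A :=
  xpow T.x (fun i => (γ i : ℕ)) * T.K (fun i => (α i : ℤ))

end TaftPresentation


section AuxAnti

open scoped TensorProduct
open Coalgebra HopfAlgebra

variable {R : Type*} {A : Type*} [CommSemiring R] [Semiring A] [HopfAlgebra R A]

theorem HopfAlgebra.antipode_one' : antipode (R := R) (1 : A) = 1 := by
  exact HopfAlgebra.antipode_one

end AuxAnti

lemma xpow_single {A : Type*} [Ring A] {n : ℕ} (x : Fin n → A) (i0 : Fin n) (m : ℕ) :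
    xpow x (fun i => if i = i0 then m else 0) = x i0 ^ m := by
  unfold xpow
  rw [List.prod_map_eq_pow_single i0 _ (fun i' hne _ => by simp [hne])]
  rw [List.count_eq_one_of_mem (List.nodup_finRange n) (List.mem_finRange i0)]
  simp

namespace TaftPresentation

variable {k : Type*} [Field k] {A : Type*} [Ring A] [HopfAlgebra k A]
  {n ℓ : ℕ} {q t : k}

lemma K_pow (T : TaftPresentation k A n ℓ q t) (α : Fin n → ℤ) :
    ∀ m : ℕ, T.K α ^ m = T.K (m • α)
  | 0 => by simp [T.K_zero]
  | (m + 1) => by rw [pow_succ, K_pow T α m, T.K_add, succ_nsmul]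

lemma K_mul_inv (T : TaftPresentation k A n ℓ q t) (α : Fin n → ℤ) :
    T.K α * T.K (-α) = 1 := by rw [T.K_add]; simp [T.K_zero]

lemma K_inv_mul (T : TaftPresentation k A n ℓ q t) (α : Fin n → ℤ) :
    T.K (-α) * T.K α = 1 := by rw [T.K_add]; simp [T.K_zero]

lemma K_neg_eps (T : TaftPresentation k A n ℓ q t) (hℓ : 0 < ℓ) (i : Fin n) :
    T.K (-epsZ i) = T.K (fun j => if j = i then ((ℓ : ℤ) - 1) else 0) := by
  have h1 : T.K (ℓ • epsZ i) = 1 := by rw [← T.K_pow, T.K_ell]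
  calc T.K (-epsZ i) = T.K (-epsZ i) * T.K (ℓ • epsZ i) := by rw [h1, mul_one]
    _ = T.K (-epsZ i + ℓ • epsZ i) := T.K_add _ _
    _ = _ := by
        congr 1
        funext j
        by_cases h : j = i <;> simp [epsZ, h] <;> ring

lemma Kq (T : TaftPresentation k A n ℓ q t) (i : Fin n) :
    T.K (epsZ i) * T.x i = q • (T.x i * T.K (epsZ i)) := by
  have h := T.K_x i i
  simpa [theta] using h

lemma x_K_eps (T : TaftPresentation k A n ℓ q t) (hq0 : q ≠ 0) (i : Fin n) :
    T.x i * T.K (epsZ i) = q⁻¹ • (T.K (epsZ i) * T.x i) := by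
  rw [T.Kq i, inv_smul_smul₀ hq0]

lemma x_K_inv (T : TaftPresentation k A n ℓ q t) (i : Fin n) :
    T.x i * T.K (-epsZ i) = q • (T.K (-epsZ i) * T.x i) := by
  calc T.x i * T.K (-epsZ i)
      = (T.K (-epsZ i) * T.K (epsZ i)) * (T.x i * T.K (-epsZ i)) := by
        rw [T.K_inv_mul, one_mul]
    _ = T.K (-epsZ i) * ((T.K (epsZ i) * T.x i) * T.K (-epsZ i)) := by
        rw [mul_assoc, ← mul_assoc (T.K (epsZ i))]
    _ = T.K (-epsZ i) * ((q • (T.x i * T.K (epsZ i))) * T.K (-epsZ i)) := by rw [T.Kq]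
    _ = q • (T.K (-epsZ i) * ((T.x i * T.K (epsZ i)) * T.K (-epsZ i))) := by
        rw [smul_mul_assoc, mul_smul_comm]
    _ = q • (T.K (-epsZ i) * T.x i) := by rw [mul_assoc (T.x i), T.K_mul_inv, mul_one]

lemma K_inv_x (T : TaftPresentation k A n ℓ q t) (hq0 : q ≠ 0) (i : Fin n) :
    T.K (-epsZ i) * T.x i = q⁻¹ • (T.x i * T.K (-epsZ i)) := by
  rw [T.x_K_inv i, inv_smul_smul₀ hq0]

end TaftPresentation

/-- when `ℓ > 1` (and `n ≥ 1`), the antipode of the `n`-rank Taft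
algebra has order `2ℓ` as a linear endomorphism, and `s²` has order `ℓ`. -/
theorem stmt5 {k : Type*} [Field k] [CharZero k] [IsAlgClosed k]
    {A : Type*} [Ring A] [HopfAlgebra k A] {n ℓ : ℕ} {q : k}
    (hq : IsPrimitiveRoot q ℓ) (hℓ : 1 < ℓ) (hn : 0 < n)
    (T : TaftPresentation k A n ℓ q q)
    (b : Module.Basis ((Fin n → Fin ℓ) × (Fin n → Fin ℓ)) k A)
    (hb : ∀ p, b p = T.mono p.1 p.2) :
    orderOf (HopfAlgebra.antipode (R := k) : Module.End k A) = 2 * ℓ ∧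
    orderOf ((HopfAlgebra.antipode (R := k) : Module.End k A) ^ 2) = ℓ := by

  classical
  haveI : NeZero ℓ := ⟨by omega⟩
  set s : Module.End k A := (HopfAlgebra.antipode (R := k) : Module.End k A) with hsdef
  have hq0 : q ≠ 0 := by
    intro h
    have h1 := hq.pow_eq_one
    rw [h, zero_pow (by omega : ℓ ≠ 0)] at h1
    exact zero_ne_one h1
  have s2mul : ∀ u v : A, s (s (u * v)) = s (s u) * s (s v) := fun u v => by
    simp only [hsdef, HopfAlgebra.antipode_mul_antidistrib]
  have s2one : s (s (1 : A)) = 1 := by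
    simp only [hsdef, HopfAlgebra.antipode_one']
  have s2K : ∀ α, s (s (T.K α)) = T.K α := fun α => by
    simp only [hsdef, T.antipode_K, neg_neg]
  have s2x : ∀ i, s (s (T.x i)) = q⁻¹ • T.x i := by
    intro i
    have h1 : s (T.x i) = -(T.K (-epsZ i) * T.x i) := T.antipode_x i
    have h2 : s (s (T.x i)) = (T.K (-epsZ i) * T.x i) * T.K (epsZ i) := by
      rw [h1, map_neg, hsdef, HopfAlgebra.antipode_mul_antidistrib, ← hsdef, h1,
        T.antipode_K, neg_neg, neg_mul, neg_neg]
    rw [h2, mul_assoc, T.x_K_eps hq0, mul_smul_comm, ← mul_assoc, T.K_inv_mul, one_mul]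
  have s2pow : ∀ (i : Fin n) (m : ℕ), s (s (T.x i ^ m)) = (q⁻¹) ^ m • T.x i ^ m := by
    intro i m
    induction m with
    | zero => simpa using s2one
    | succ m ih =>
        rw [pow_succ, s2mul, ih, s2x, smul_mul_smul_comm, ← pow_succ, ← pow_succ]
  have s2list : ∀ (γ : Fin n → ℕ) (l : List (Fin n)),
      s (s ((l.map (fun i => T.x i ^ γ i)).prod)) =
        (q⁻¹) ^ ((l.map γ).sum) • (l.map (fun i => T.x i ^ γ i)).prod := by
    intro γ l
    induction l with
    | nil => simpa using s2one
    | cons a l ih =>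
        simp only [List.map_cons, List.prod_cons, List.sum_cons]
        rw [s2mul, ih, s2pow, smul_mul_smul_comm, ← pow_add]
  have s2mono : ∀ p : (Fin n → Fin ℓ) × (Fin n → Fin ℓ),
      s (s (T.mono p.1 p.2)) = (q⁻¹) ^ (∑ i, (p.1 i : ℕ)) • T.mono p.1 p.2 := by
    intro p
    rw [TaftPresentation.mono, s2mul, s2K]
    rw [show xpow T.x (fun i => ((p.1 i : ℕ))) =
      ((List.finRange n).map (fun i => T.x i ^ ((p.1 i : ℕ)))).prod from rfl]
    rw [s2list, Fin.sum_univ_def, smul_mul_assoc]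
  have hS2 : ∀ p, (s ^ 2) (b p) = (q⁻¹) ^ (∑ i, (p.1 i : ℕ)) • b p := by
    intro p
    rw [pow_two, Module.End.mul_apply, hb, s2mono]
  have hS2m : ∀ (m : ℕ) (p), ((s ^ 2) ^ m) (b p) =
      ((q⁻¹) ^ (∑ i, (p.1 i : ℕ))) ^ m • b p := by
    intro m p
    induction m with
    | zero => simp
    | succ m ih => rw [pow_succ, Module.End.mul_apply, hS2, map_smul, ih, smul_smul, pow_succ']
  have hs2ℓ : (s ^ 2) ^ ℓ = (1 : Module.End k A) := by
    refine b.ext fun p => ?_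
    rw [hS2m, Module.End.one_apply, ← pow_mul, mul_comm, pow_mul, inv_pow, hq.pow_eq_one,
      inv_one, one_pow, one_smul]
  set i0 : Fin n := ⟨0, hn⟩ with hi0
  set γ0 : Fin n → Fin ℓ := fun i => if i = i0 then (1 : Fin ℓ) else 0 with hγ0
  set p0 : (Fin n → Fin ℓ) × (Fin n → Fin ℓ) := (γ0, 0) with hp0
  have hval1 : ((1 : Fin ℓ) : ℕ) = 1 := by
    rw [Fin.val_one']
    exact Nat.mod_eq_of_lt hℓ
  have hxp0 : (fun i => ((γ0 i : ℕ))) = fun i => if i = i0 then 1 else 0 := by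
    funext i
    by_cases h : i = i0
    · subst h
      simp [hγ0, Fin.val_one']
      exact Nat.mod_eq_of_lt hℓ
    · simp [hγ0, h]
  have hw0 : (∑ i, ((p0.1 i : ℕ))) = 1 := by
    show (∑ i, ((γ0 i : ℕ))) = 1
    calc ∑ i, ((γ0 i : ℕ)) = ∑ i, (if i = i0 then 1 else 0) :=
          Finset.sum_congr rfl fun i _ => congrFun hxp0 i
      _ = 1 := by rw [Finset.sum_ite_eq' Finset.univ i0 (fun _ => 1)]; simp
  have key : ∀ m : ℕ, ((s ^ 2) ^ m : Module.End k A) = 1 → ℓ ∣ m := by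
    intro m hm
    have h1 : ((s ^ 2) ^ m) (b p0) = b p0 := by rw [hm, Module.End.one_apply]
    rw [hS2m, hw0, pow_one] at h1
    have h2 : ((q⁻¹) ^ m - 1) • b p0 = 0 := by
      rw [sub_smul, one_smul, h1, sub_self]
    have h3 : (q⁻¹) ^ m = 1 := by
      rcases smul_eq_zero.mp h2 with h | h
      · have := sub_eq_zero.mp h; exact this
      · exact absurd h (b.ne_zero p0)
    rw [inv_pow, inv_eq_one] at h3
    exact (hq.pow_eq_one_iff_dvd m).mp h3
  have hordS2 : orderOf (s ^ 2 : Module.End k A) = ℓ :=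
    Nat.dvd_antisymm (orderOf_dvd_of_pow_eq_one hs2ℓ) (key _ (pow_orderOf_eq_one _))
  have hs2l' : s ^ (2 * ℓ) = 1 := by rw [pow_mul]; exact hs2ℓ
  have hdvd : orderOf s ∣ 2 * ℓ := orderOf_dvd_of_pow_eq_one hs2l'
  have hldvd : ℓ ∣ orderOf s := by
    have h1 : (s ^ 2) ^ orderOf s = 1 := by
      rw [← pow_mul, mul_comm, pow_mul, pow_orderOf_eq_one, one_pow]
    have h2 := orderOf_dvd_of_pow_eq_one h1
    rwa [hordS2] at h2
  have hb0 : b p0 = T.x i0 := by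
    rw [hb, hp0]
    show T.mono γ0 0 = _
    rw [TaftPresentation.mono, hxp0, xpow_single, pow_one]
    have : T.K (fun i => (((0 : Fin n → Fin ℓ) i : ℤ))) = 1 := by
      rw [show (fun i => (((0 : Fin n → Fin ℓ) i : ℤ))) = (0 : Fin n → ℤ) by
        funext i; simp, T.K_zero]
    rw [this, mul_one]
  have hne : orderOf s ≠ ℓ := by
    intro hord
    have hsl : s ^ ℓ = 1 := hord ▸ pow_orderOf_eq_one s
    rcases Nat.even_or_odd ℓ with he | ho
    · obtain ⟨u, hu⟩ := he
      have h2 : (s ^ 2) ^ u = 1 := by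
        rw [← pow_mul, show 2 * u = ℓ by omega]; exact hsl
      have hdu : ℓ ∣ u := key u h2
      have : ℓ ≤ u := Nat.le_of_dvd (by omega) hdu
      omega
    · obtain ⟨u, hu⟩ := ho
      have hS1 : s = (s ^ 2) ^ (u + 1) := by
        have h1 : s ^ (ℓ + 1) = s := by rw [pow_succ, hsl, one_mul]
        rw [← pow_mul, show 2 * (u + 1) = ℓ + 1 by omega, h1]
      set α1 : Fin n → Fin ℓ := fun j => if j = i0 then (⟨ℓ - 1, by omega⟩ : Fin ℓ) else 0
        with hα1
      have hbp1 : T.x i0 * T.K (-epsZ i0) = b (γ0, α1) := by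
        rw [hb]
        show _ = T.mono γ0 α1
        rw [TaftPresentation.mono, hxp0, xpow_single, pow_one]
        congr 1
        rw [T.K_neg_eps (by omega : 0 < ℓ) i0]
        congr 1
        funext j
        by_cases h : j = i0
        · subst h
          simp [hα1]
          omega
        · simp [hα1, h]
      have hsx : s (b p0) = (-(q⁻¹)) • b (γ0, α1) := by
        rw [hb0]
        rw [show s (T.x i0) = -(T.K (-epsZ i0) * T.x i0) from T.antipode_x i0]
        rw [T.K_inv_x hq0 i0, hbp1, ← neg_smul]
      have heval : s (b p0) = ((q⁻¹) ^ (u + 1)) • b p0 := by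
        conv_lhs => rw [hS1]
        rw [hS2m, hw0, pow_one]
      have hcontr : (-(q⁻¹)) • b (γ0, α1) = ((q⁻¹) ^ (u + 1)) • b p0 := by
        rw [← hsx, heval]
      have hrepr := congrArg (fun v => (b.repr v) (γ0, α1)) hcontr
      have hne01 : p0 ≠ (γ0, α1) := by
        intro h
        have h2 : (0 : Fin n → Fin ℓ) = α1 := congrArg Prod.snd h
        have h3 := congrFun h2 i0
        rw [hα1] at h3
        simp only [if_pos rfl, Pi.zero_apply] at h3
        have := congrArg Fin.val h3
        simp at this
        omega
      simp only [map_smul, Finsupp.smul_apply, Module.Basis.repr_self] at hrepr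
      rw [Finsupp.single_apply, if_pos rfl, Finsupp.single_apply, if_neg hne01] at hrepr
      have hq1 : q⁻¹ = 0 := by simpa using hrepr
      exact hq0 (inv_eq_zero.mp hq1)
  have hordS : orderOf s = 2 * ℓ := by
    obtain ⟨c, hc⟩ := hldvd
    have hc2 : c ∣ 2 := by
      have h1 : ℓ * c ∣ ℓ * 2 := by rw [← hc, mul_comm ℓ 2]; exact hdvd
      exact (Nat.mul_dvd_mul_iff_left (show 0 < ℓ by omega)).mp h1
    rcases (Nat.dvd_prime Nat.prime_two).mp hc2 with h1 | h2
    · exact absurd (by rw [hc, h1, mul_one]) hne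
    · rw [hc, h2, mul_comm]
  exact ⟨hordS, hordS2⟩
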